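/- Let X be an n×K membership matrix with all cluster sizes s_k ≥ 1, Δ the K×K diagonal matrix with entries √s_k, and Θ any K×K real matrix. Then the characteristic polynomial of the n×n matrix X Θ Xᵀ equals t^{n−K} times the characteristic polynomial of the K×K matrix Δ Θ Δ. In particular, the nonzero eigenvalues (with multiplicity) of X Θ Xᵀ coincide with those of Δ Θ Δ. -/
import Mathlib


open Matrix Polynomial

lemma eval_charpoly_aux {m : ℕ} (M : Matrix (Fin m) (Fin m) ℝ) (t : ℝ) :
    (M.charpoly).eval t = (t • (1 : Matrix (Fin m) (Fin m) ℝ) - M).det := by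
  rw [Matrix.charpoly, ← Polynomial.coe_evalRingHom, RingHom.map_det]
  congr 1
  ext i j
  simp [Matrix.charmatrix_apply, Matrix.one_apply, Matrix.diagonal_apply,
    apply_ite (Polynomial.eval t)]

lemma det_smul_factor {m : ℕ} (M : Matrix (Fin m) (Fin m) ℝ) {t : ℝ} (ht : t ≠ 0) :
    (t • (1 : Matrix (Fin m) (Fin m) ℝ) - M).det
      = t ^ m * ((1 : Matrix (Fin m) (Fin m) ℝ) - t⁻¹ • M).det := by
  have h : t • (1 : Matrix (Fin m) (Fin m) ℝ) - M
      = t • ((1 : Matrix (Fin m) (Fin m) ℝ) - t⁻¹ • M) := by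
    rw [smul_sub, smul_inv_smul₀ ht]
  rw [h, Matrix.det_smul, Fintype.card_fin]

/-- The characteristic polynomial of `X Θ Xᵀ` equals `t^(n-K)` times the
characteristic polynomial of `Δ Θ Δ`, for a membership matrix `X` with all cluster sizes ≥ 1. -/
theorem membership_charpoly (n K : ℕ)
    (X : Matrix (Fin n) (Fin K) ℝ) (g : Fin n → Fin K)
    (hX : ∀ i k, X i k = if g i = k then 1 else 0)
    (s : Fin K → ℝ)
    (hs : ∀ k, s k = ((Finset.univ.filter (fun i => g i = k)).card : ℝ))
    (hs1 : ∀ k, 1 ≤ s k)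
    (Δ : Matrix (Fin K) (Fin K) ℝ)
    (hΔ : Δ = Matrix.diagonal (fun k => Real.sqrt (s k)))
    (Θ : Matrix (Fin K) (Fin K) ℝ) :
    (X * Θ * Xᵀ).charpoly = Polynomial.X ^ (n - K) * (Δ * Θ * Δ).charpoly := by
  -- g is surjective, hence K ≤ n
  have hsurj : Function.Surjective g := by
    intro k
    have h1 : (1 : ℝ) ≤ ((Finset.univ.filter (fun i => g i = k)).card : ℝ) := by
      rw [← hs]; exact hs1 k
    have h2 : 1 ≤ (Finset.univ.filter (fun i => g i = k)).card := by exact_mod_cast h1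
    obtain ⟨i, hi⟩ := Finset.card_pos.mp h2
    exact ⟨i, (Finset.mem_filter.mp hi).2⟩
  have hKn : K ≤ n := by
    have := Fintype.card_le_of_surjective g hsurj
    simpa using this
  -- XᵀX = diagonal s
  have hXTX : Xᵀ * X = Matrix.diagonal s := by
    ext k l
    simp only [Matrix.mul_apply, Matrix.transpose_apply, hX]
    by_cases h : k = l
    · subst h
      rw [Matrix.diagonal_apply_eq, hs]
      rw [Finset.card_filter]
      push_cast
      apply Finset.sum_congr rfl
      intro i _
      split <;> simp_all
    · rw [Matrix.diagonal_apply_ne _ h]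
      apply Finset.sum_eq_zero
      intro i _
      split <;> split <;> simp_all
  -- Δ * Δ = diagonal s
  have hΔΔ : Δ * Δ = Matrix.diagonal s := by
    rw [hΔ, Matrix.diagonal_mul_diagonal]
    have : (fun k => Real.sqrt (s k) * Real.sqrt (s k)) = s := by
      funext k
      exact Real.mul_self_sqrt (le_trans zero_le_one (hs1 k))
    rw [this]
  -- compare evaluations at all nonzero reals
  apply Polynomial.eq_of_infinite_eval_eq
  apply Set.Infinite.mono (s := ({0}ᶜ : Set ℝ))
  · intro t ht
    have ht0 : t ≠ 0 := ht
    simp only [Set.mem_setOf_eq, Polynomial.eval_mul, Polynomial.eval_pow, Polynomial.eval_X,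
      eval_charpoly_aux]
    rw [det_smul_factor _ ht0, det_smul_factor _ ht0]
    have step1 : (1 : Matrix (Fin n) (Fin n) ℝ) - t⁻¹ • (X * Θ * Xᵀ)
        = 1 - X * (t⁻¹ • (Θ * Xᵀ)) := by
      rw [Matrix.mul_smul, Matrix.mul_assoc]
    have step2 : (t⁻¹ • (Θ * Xᵀ)) * X = (t⁻¹ • (Θ * Δ)) * Δ := by
      rw [Matrix.smul_mul, Matrix.smul_mul, Matrix.mul_assoc, hXTX, Matrix.mul_assoc, hΔΔ]
    have step3 : Δ * (t⁻¹ • (Θ * Δ)) = t⁻¹ • (Δ * Θ * Δ) := by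
      rw [Matrix.mul_smul, Matrix.mul_assoc]
    rw [step1, Matrix.det_one_sub_mul_comm, step2, Matrix.det_one_sub_mul_comm, step3]
    rw [← mul_assoc, ← pow_add, Nat.sub_add_cancel hKn]
  · exact Set.Finite.infinite_compl (Set.finite_singleton 0)
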